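/- Let Λ be an artin algebra and z a class of finite length Λ-modules such that add(z) is closed under extensions and every module in z has projective dimension at most 1. Then g(z), the class of all Λ-modules generated by z, is closed under extensions. -/

import Mathlib

universe u v

/-- `g(z)`: the class of modules generated by `z`, i.e. epimorphic images of
(possibly infinite) direct sums of modules in `z`. -/
def genBy {Λ : Type u} [Ring Λ] (z : Set (ModuleCat.{v} Λ)) : Set (ModuleCat.{v} Λ) :=
  {M | ∃ (ι : Type v) (N : ι → ModuleCat.{v} Λ), (∀ i, N i ∈ z) ∧
    ∃ f : (DirectSum ι fun i => ↥(N i)) →ₗ[Λ] M, Function.Surjective f}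

/-- `add(z)`: the modules which are direct summands of finite direct sums of modules
in `z`. -/
def addCl {Λ : Type u} [Ring Λ] (z : Set (ModuleCat.{v} Λ)) : Set (ModuleCat.{v} Λ) :=
  {M | ∃ (n : ℕ) (N : Fin n → ModuleCat.{v} Λ), (∀ i, N i ∈ z) ∧
    ∃ (s : M →ₗ[Λ] ∀ i, ↥(N i)) (p : (∀ i, ↥(N i)) →ₗ[Λ] M), p.comp s = LinearMap.id}

/-- A class of modules is closed under extensions. -/
def ClosedUnderExt {Λ : Type u} [Ring Λ] (X : Set (ModuleCat.{v} Λ)) : Prop :=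
  ∀ (Y : ModuleCat.{v} Λ) (U : Submodule Λ Y),
    ModuleCat.of Λ U ∈ X → ModuleCat.of Λ (↥Y ⧸ U) ∈ X → Y ∈ X

/-- A module has projective dimension at most 1 if it is the quotient of a projective
module by a projective submodule (i.e. the first syzygy is projective). -/
def ProjDimLE1 {Λ : Type u} [Ring Λ] (M : ModuleCat.{v} Λ) : Prop :=
  ∃ (P : ModuleCat.{v} Λ), Module.Projective Λ ↥P ∧
    ∃ f : P →ₗ[Λ] M, Function.Surjective f ∧ Module.Projective Λ ↥(LinearMap.ker f)

section dsum
variable (Λ : Type u) [Ring Λ] {J : Type v} (W : J → Type v)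
  [∀ j, AddCommGroup (W j)] [∀ j, Module Λ (W j)] [DecidableEq J] (S : Finset J)

noncomputable def iotaS : (∀ j : S, W j) →ₗ[Λ] DirectSum J W :=
  ∑ j : S, (DirectSum.lof Λ J W j.val).comp (LinearMap.proj j)

lemma iotaS_apply (y : ∀ j : S, W j) (j' : J) :
    (iotaS Λ W S y) j' = if h : j' ∈ S then y ⟨j', h⟩ else 0 := by
  classical
  have : (iotaS Λ W S y) j' = ∑ j : S, ((DirectSum.lof Λ J W j.val) (y j)) j' := by
    rw [iotaS, LinearMap.sum_apply]
    exact DFinsupp.finset_sum_apply _ _ _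
  rw [this]
  by_cases h : j' ∈ S
  · rw [Finset.sum_eq_single_of_mem (⟨j', h⟩ : S) (Finset.mem_univ _)]
    · rw [DirectSum.lof_eq_of, DirectSum.of_eq_same, dif_pos h]
    · intro b _ hb
      rw [DirectSum.lof_eq_of, DirectSum.of_eq_of_ne]
      exact fun hc => hb (Subtype.ext hc.symm)
  · rw [dif_neg h, Finset.sum_eq_zero]
    intro b _
    rw [DirectSum.lof_eq_of, DirectSum.of_eq_of_ne]
    exact fun hc => h (hc ▸ b.2)

lemma iotaS_restrict [∀ (j : J) (x : W j), Decidable (x ≠ 0)]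
    (x : DirectSum J W) (hx : DFinsupp.support x ⊆ S) :
    iotaS Λ W S (fun j => x j.val) = x := by
  apply DFinsupp.ext
  intro j'
  rw [iotaS_apply]
  by_cases h : j' ∈ S
  · rw [dif_pos h]
  · rw [dif_neg h]
    by_contra hc
    exact h (hx (DFinsupp.mem_support_iff.mpr fun he => hc he.symm))

noncomputable def piS : DirectSum J W →ₗ[Λ] (∀ j : S, W j) :=
  LinearMap.pi fun j => DirectSum.component Λ J W j.val

lemma piS_iotaS (y : ∀ j : S, W j) : piS Λ W S (iotaS Λ W S y) = y := by
  funext j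
  show (iotaS Λ W S y) j.val = y j
  rw [iotaS_apply, dif_pos j.2]

lemma iotaS_injective : Function.Injective (iotaS Λ W S) :=
  Function.LeftInverse.injective (piS_iotaS Λ W S)
end dsum


section helpers
variable {Λ : Type u} [Ring Λ] {z : Set (ModuleCat.{v} Λ)}

lemma addCl_of_equiv {M M' : ModuleCat.{v} Λ} (e : ↥M ≃ₗ[Λ] ↥M')
    (h : M' ∈ addCl z) : M ∈ addCl z := by
  obtain ⟨n, N, hN, s, p, hps⟩ := h
  refine ⟨n, N, hN, s.comp e.toLinearMap, e.symm.toLinearMap.comp p, ?_⟩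
  ext x
  simp only [LinearMap.comp_apply, LinearMap.id_apply, LinearEquiv.coe_coe]
  have : p (s (e x)) = e x := by
    have := LinearMap.congr_fun hps (e x)
    simpa using this
  rw [this]; exact e.symm_apply_apply x

lemma mem_addCl_of_mem {M' : ModuleCat.{v} Λ} (h : M' ∈ z) : M' ∈ addCl z := by
  refine ⟨1, fun _ => M', fun _ => h, LinearMap.pi fun _ => LinearMap.id,
    LinearMap.proj 0, rfl⟩

lemma addCl_pi (n : ℕ) (N : Fin n → ModuleCat.{v} Λ) (hN : ∀ i, N i ∈ z) :
    ModuleCat.of Λ (∀ i, ↥(N i)) ∈ addCl z :=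
  ⟨n, N, hN, LinearMap.id, LinearMap.id, rfl⟩

lemma addCl_surj {M : ModuleCat.{v} Λ} (h : M ∈ addCl z) :
    ∃ (n : ℕ) (N : Fin n → ModuleCat.{v} Λ), (∀ i, N i ∈ z) ∧
      ∃ p : (∀ i, ↥(N i)) →ₗ[Λ] ↥M, Function.Surjective p := by
  obtain ⟨n, N, hN, s, p, hps⟩ := h
  exact ⟨n, N, hN, p, fun x => ⟨s x, LinearMap.congr_fun hps x⟩⟩
end helpers

lemma keyLemma {k : Type u} [Field k] {Λ : Type u} [Ring Λ] [Algebra k Λ]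
    [FiniteDimensional k Λ] {z : Set (ModuleCat.{v} Λ)}
    (hext : ClosedUnderExt (addCl z))
    {Y : ModuleCat.{v} Λ} (U : Submodule Λ Y)
    {J : Type v} (W : J → ModuleCat.{v} Λ) (hW : ∀ j, W j ∈ z)
    (r : (DirectSum J fun j => ↥(W j)) →ₗ[Λ] ↥U) (hr : Function.Surjective r)
    {Z : ModuleCat.{v} Λ} (hZ : Z ∈ z) (hZfl : IsFiniteLength Λ ↥Z) (hZpd : ProjDimLE1 Z)
    (qZ : ↥Z →ₗ[Λ] (↥Y ⧸ U)) :
    ∃ (X : ModuleCat.{v} Λ), X ∈ addCl z ∧ ∃ (α : ↥X →ₗ[Λ] ↥Y) (β : ↥X →ₗ[Λ] ↥Z),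
      Function.Surjective β ∧ U.mkQ.comp α = qZ.comp β := by
  classical
  obtain ⟨P, hP, p, hpsurj, hK⟩ := hZpd
  haveI := hP
  haveI := hK
  set K := LinearMap.ker p with hKdef
  -- lift qZ ∘ p through the quotient
  obtain ⟨φ, hφ⟩ := Module.projective_lifting_property U.mkQ (qZ.comp p) U.mkQ_surjective
  have hφapp : ∀ v : ↥P, U.mkQ (φ v) = qZ (p v) := fun v => LinearMap.congr_fun hφ v
  have hφK : ∀ x : ↥K, φ x.val ∈ U := by
    intro x
    have h1 : U.mkQ (φ x.val) = qZ (p x.val) := hφapp x.val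
    have h2 : p x.val = 0 := x.2
    rw [h2, map_zero] at h1
    rwa [← Submodule.Quotient.mk_eq_zero, ← Submodule.mkQ_apply]
  let φ' : ↥K →ₗ[Λ] ↥U := (φ.comp K.subtype).codRestrict U fun x => hφK x
  obtain ⟨ψ, hψ⟩ := Module.projective_lifting_property r φ' hr
  have hψapp : ∀ x : ↥K, r (ψ x) = φ' x := fun x => LinearMap.congr_fun hψ x
  -- the pushout X0 = (P ⊕ ⊕W) / D
  set DS := DirectSum J fun j => ↥(W j) with hDSdef
  let d : ↥K →ₗ[Λ] ↥P × DS := LinearMap.prod K.subtype (-ψ)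
  set D : Submodule Λ (↥P × DS) := LinearMap.range d with hDdef
  have hDβ : D ≤ LinearMap.ker (p.comp (LinearMap.fst Λ ↥P DS)) := by
    rintro v ⟨x, rfl⟩
    simp only [LinearMap.mem_ker, LinearMap.comp_apply, LinearMap.fst_apply]
    exact x.2
  let β₀ : ((↥P × DS) ⧸ D) →ₗ[Λ] ↥Z := D.liftQ (p.comp (LinearMap.fst Λ ↥P DS)) hDβ
  let a0 : (↥P × DS) →ₗ[Λ] ↥Y :=
    (φ.comp (LinearMap.fst Λ ↥P DS)) + ((U.subtype.comp r).comp (LinearMap.snd Λ ↥P DS))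
  have hDα : D ≤ LinearMap.ker a0 := by
    rintro v ⟨x, rfl⟩
    simp only [LinearMap.mem_ker, LinearMap.add_apply, LinearMap.comp_apply, a0, d,
      LinearMap.prod_apply, Pi.prod, Function.prod_apply, LinearMap.fst_apply, LinearMap.snd_apply,
      LinearMap.neg_apply, map_neg]
    rw [hψapp x]
    show φ x.val + -(φ x.val) = 0
    simp
  let α₀ : ((↥P × DS) ⧸ D) →ₗ[Λ] ↥Y := D.liftQ a0 hDα
  let γ : DS →ₗ[Λ] ((↥P × DS) ⧸ D) := D.mkQ.comp (LinearMap.inr Λ ↥P DS)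
  have hβ₀mk : ∀ v : ↥P × DS, β₀ (Submodule.Quotient.mk v) = p v.1 := fun v =>
    Submodule.liftQ_apply D _ v
  have hα₀mk : ∀ v : ↥P × DS, α₀ (Submodule.Quotient.mk v) = φ v.1 + (r v.2 : ↥Y) := fun v =>
    Submodule.liftQ_apply D _ v
  have hγ : ∀ w : DS, γ w = Submodule.Quotient.mk ((0, w) : ↥P × DS) := fun w => rfl
  have hβγ : ∀ w : DS, β₀ (γ w) = 0 := by
    intro w; rw [hγ, hβ₀mk]; exact map_zero p
  have hαγ : ∀ w : DS, α₀ (γ w) = (r w : ↥Y) := by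
    intro w; rw [hγ, hα₀mk]; simp
  have hπα : ∀ t, U.mkQ (α₀ t) = qZ (β₀ t) := by
    intro t
    obtain ⟨v, rfl⟩ := Submodule.Quotient.mk_surjective D t
    rw [hα₀mk, hβ₀mk, map_add, hφapp]
    have : U.mkQ (r v.2 : ↥Y) = 0 := by
      rw [Submodule.mkQ_apply, Submodule.Quotient.mk_eq_zero]
      exact (r v.2).2
    rw [this, add_zero]
  have hγinj : Function.Injective γ := by
    intro w w' hww
    have hD0 : ((0, w) : ↥P × DS) - (0, w') ∈ D := by
      rw [← Submodule.Quotient.eq]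
      exact hww
    obtain ⟨xk, hx⟩ := hD0
    have hx1 : (xk : ↥P) = 0 := by
      have := congrArg Prod.fst hx
      simpa [d] using this
    have hxk : xk = 0 := Subtype.ext hx1
    have hx2 := congrArg Prod.snd hx
    rw [hxk] at hx2
    simp only [d, LinearMap.prod_apply, Pi.prod, LinearMap.neg_apply, map_zero, neg_zero,
      Prod.snd_sub] at hx2
    exact (sub_eq_zero.mp hx2.symm)
  -- finite generation data
  haveI : IsNoetherian Λ ↥Z := (isFiniteLength_iff_isNoetherian_isArtinian.mp hZfl).1
  haveI : Module.Finite Λ ↥Z := inferInstance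
  obtain ⟨n, zv, hzv⟩ := Module.Finite.exists_fin (R := Λ) (M := ↥Z)
  let σ : (Fin n → Λ) →ₗ[Λ] ↥Z := Fintype.linearCombination Λ zv
  have hσapp : ∀ c : Fin n → Λ, σ c = ∑ l, c l • zv l := fun c =>
    Fintype.linearCombination_apply Λ zv c
  have hσsurj : Function.Surjective σ := by
    rw [← LinearMap.range_eq_top, Fintype.range_linearCombination, hzv]
  haveI hNoe : IsNoetherian Λ Λ := isNoetherian_of_tower k inferInstance
  haveI : ∀ i : Fin n, IsNoetherian Λ Λ := fun _ => hNoe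
  haveI : IsNoetherian Λ (Fin n → Λ) := inferInstance
  obtain ⟨m, rv, hrv⟩ := Submodule.fg_iff_exists_fin_generating_family.mp
    (IsNoetherian.noetherian (LinearMap.ker σ))
  have hrvker : ∀ t, σ (rv t) = 0 := by
    intro t
    have : rv t ∈ LinearMap.ker σ := by
      rw [← hrv]; exact Submodule.subset_span ⟨t, rfl⟩
    exact this
  have hpv : ∀ l, ∃ v : ↥P, p v = zv l := fun l => hpsurj (zv l)
  choose pv hpveq using hpv
  have hκmem : ∀ t : Fin m, (∑ l, rv t l • pv l) ∈ K := by
    intro t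
    rw [hKdef, LinearMap.mem_ker, map_sum]
    simp only [map_smul, hpveq]
    rw [← hσapp, hrvker]
  let κ : Fin m → ↥K := fun t => ⟨∑ l, rv t l • pv l, hκmem t⟩
  set S : Finset J := Finset.univ.biUnion (fun t : Fin m => DFinsupp.support (ψ (κ t)))
    with hSdef
  have hsupp : ∀ t, DFinsupp.support (ψ (κ t)) ⊆ S := fun t =>
    Finset.subset_biUnion_of_mem (fun t : Fin m => DFinsupp.support (ψ (κ t))) (Finset.mem_univ t)
  set Wsub : Submodule Λ DS := LinearMap.range (iotaS Λ (fun j => ↥(W j)) S) with hWsubdef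
  have hψκWsub : ∀ t, ψ (κ t) ∈ Wsub := by
    intro t
    exact ⟨fun j => (ψ (κ t)) j.val, iotaS_restrict Λ (fun j => ↥(W j)) S _ (hsupp t)⟩
  let pe : Fin n → ↥P × DS := fun l => (pv l, 0)
  let x : Fin n → ((↥P × DS) ⧸ D) := fun l => Submodule.Quotient.mk (pe l)
  set X' : Submodule Λ ((↥P × DS) ⧸ D) :=
    Submodule.span Λ (Set.range x) ⊔ Submodule.map γ Wsub with hX'def
  -- key computation: mk (κ t, 0) = γ (ψ (κ t))
  have hmkκ : ∀ t : Fin m,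
      (Submodule.Quotient.mk (((κ t).val, 0) : ↥P × DS) : (↥P × DS) ⧸ D) = γ (ψ (κ t)) := by
    intro t
    rw [hγ, Submodule.Quotient.eq]
    exact ⟨κ t, by simp [d]⟩
  have hsumx : ∀ c : Fin n → Λ,
      (∑ l, c l • x l) = Submodule.Quotient.mk ((∑ l, c l • pv l, 0) : ↥P × DS) := by
    intro c
    have h1 : (∑ l, c l • x l) = D.mkQ (∑ l, c l • pe l) := by
      rw [map_sum]
      simp only [map_smul]
      rfl
    have h2 : (∑ l, c l • pe l) = ((∑ l, c l • pv l, 0) : ↥P × DS) := by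
      refine Prod.ext ?_ ?_
      · simp [pe, Prod.fst_sum]
      · simp [pe, Prod.snd_sum]
    rw [h1, h2, Submodule.mkQ_apply]
  have hxX' : ∀ l, x l ∈ X' := fun l => Submodule.mem_sup_left (Submodule.subset_span ⟨l, rfl⟩)
  have hβx : ∀ l, β₀ (x l) = zv l := by
    intro l
    rw [show x l = Submodule.Quotient.mk (pe l) from rfl, hβ₀mk]
    exact hpveq l
  have hker_span : ∀ c : Fin n → Λ, σ c = 0 → ∃ w ∈ Wsub, (∑ l, c l • x l) = γ w := by
    intro c hc
    have hmem : c ∈ LinearMap.ker σ := hc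
    rw [← hrv] at hmem
    obtain ⟨dcoef, hd⟩ := (Submodule.mem_span_range_iff_exists_fun Λ).mp hmem
    refine ⟨∑ t, dcoef t • ψ (κ t),
      Submodule.sum_mem _ fun t _ => Submodule.smul_mem _ _ (hψκWsub t), ?_⟩
    have h1 : (∑ l, c l • x l) = ∑ t, dcoef t • ∑ l, rv t l • x l := by
      rw [← hd]
      simp only [Finset.sum_apply, Pi.smul_apply, smul_eq_mul, Finset.sum_smul,
        Finset.smul_sum, mul_smul]
      rw [Finset.sum_comm]
    have h2 : ∀ t, (∑ l, rv t l • x l) = γ (ψ (κ t)) := by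
      intro t
      rw [hsumx (rv t)]
      exact hmkκ t
    rw [h1]
    simp only [h2, ← map_smul γ, ← map_sum]
  let βX' : ↥X' →ₗ[Λ] ↥Z := β₀.comp X'.subtype
  let αX' : ↥X' →ₗ[Λ] ↥Y := α₀.comp X'.subtype
  have hβX'surj : Function.Surjective βX' := by
    intro zz
    have hmem : zz ∈ Submodule.span Λ (Set.range zv) := hzv ▸ Submodule.mem_top
    obtain ⟨c, hc⟩ := (Submodule.mem_span_range_iff_exists_fun Λ).mp hmem
    refine ⟨⟨∑ l, c l • x l, Submodule.sum_mem _ fun l _ => Submodule.smul_mem _ _ (hxX' l)⟩, ?_⟩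
    show β₀ (∑ l, c l • x l) = zz
    rw [map_sum]
    simp only [map_smul, hβx]
    exact hc
  set U' : Submodule Λ ↥X' := Submodule.comap X'.subtype (Submodule.map γ Wsub) with hU'def
  have hkerβX' : ∀ u : ↥X', β₀ (u : (↥P × DS) ⧸ D) = 0 → (u : (↥P × DS) ⧸ D) ∈ Submodule.map γ Wsub := by
    intro u hu
    obtain ⟨s, hs, g, hg, hsg⟩ := Submodule.mem_sup.mp u.2
    obtain ⟨c, hc⟩ := (Submodule.mem_span_range_iff_exists_fun Λ).mp hs
    obtain ⟨w, hw, rfl⟩ := hg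
    have hβu : σ c = 0 := by
      have h0 : β₀ (s + γ w) = 0 := by rw [hsg]; exact hu
      rw [map_add, hβγ, add_zero, ← hc, map_sum] at h0
      simp only [map_smul, hβx] at h0
      rw [hσapp]
      exact h0
    obtain ⟨w', hw', hsw'⟩ := hker_span c hβu
    rw [← hsg, ← hc, hsw']
    exact ⟨w' + w, Submodule.add_mem _ hw' hw, map_add γ _ _⟩
  have hkerU' : LinearMap.ker βX' = U' := by
    ext u
    constructor
    · intro hu
      exact hkerβX' u hu
    · intro hu
      obtain ⟨w, _, hwu⟩ := hu
      have h0 : β₀ (X'.subtype u) = 0 := by rw [← hwu, hβγ]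
      exact h0
  have hγWle : Submodule.map γ Wsub ≤ X' := le_sup_right
  let e1 : ↥U' ≃ₗ[Λ] ↥(Submodule.map γ Wsub) := Submodule.comapSubtypeEquivOfLe hγWle
  let e2 : ↥Wsub ≃ₗ[Λ] ↥(Submodule.map γ Wsub) := Submodule.equivMapOfInjective γ hγinj Wsub
  let e3 : (∀ j : S, ↥(W j.val)) ≃ₗ[Λ] ↥Wsub :=
    LinearEquiv.ofInjective _ (iotaS_injective Λ (fun j => ↥(W j)) S)
  let efin : Fin S.card ≃ ↥S := S.equivFin.symm
  let e4 : (∀ t : Fin S.card, ↥(W (efin t).val)) ≃ₗ[Λ] (∀ j : S, ↥(W j.val)) :=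
    LinearEquiv.piCongrLeft Λ (fun j : S => ↥(W j.val)) efin
  have hU'addCl : ModuleCat.of Λ ↥U' ∈ addCl z := by
    refine addCl_of_equiv (M' := ModuleCat.of Λ (∀ t : Fin S.card, ↥(W (efin t).val)))
      (e1.trans (e2.symm.trans (e3.symm.trans e4.symm))) ?_
    exact addCl_pi S.card (fun t => W (efin t).val) (fun t => hW _)
  have hQaddCl : ModuleCat.of Λ (↥(ModuleCat.of Λ ↥X') ⧸ U') ∈ addCl z := by
    have e5 : (↥X' ⧸ LinearMap.ker βX') ≃ₗ[Λ] ↥Z :=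
      LinearMap.quotKerEquivOfSurjective βX' hβX'surj
    have e6 : (↥X' ⧸ U') ≃ₗ[Λ] (↥X' ⧸ LinearMap.ker βX') :=
      Submodule.quotEquivOfEq _ _ hkerU'.symm
    exact addCl_of_equiv (M' := Z) (e6.trans e5) (mem_addCl_of_mem hZ)
  have hXaddCl : ModuleCat.of Λ ↥X' ∈ addCl z :=
    hext (ModuleCat.of Λ ↥X') U' hU'addCl hQaddCl
  refine ⟨ModuleCat.of Λ ↥X', hXaddCl, αX', βX', hβX'surj, ?_⟩
  ext u
  exact hπα u.val


/-- Lemma 4 (second case): Let `Λ` be an artin algebra (a finite dimensional algebra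
over a field) and `z` a class of finite length `Λ`-modules such that `add z` is closed
under extensions and every module in `z` has projective dimension at most 1. Then
`g(z)` is closed under extensions. -/
theorem stmt_8 {k : Type u} [Field k] {Λ : Type u} [Ring Λ] [Algebra k Λ]
    [FiniteDimensional k Λ] (z : Set (ModuleCat.{v} Λ))
    (hfl : ∀ Z ∈ z, IsFiniteLength Λ ↥Z)
    (hext : ClosedUnderExt (addCl z))
    (hpd : ∀ Z ∈ z, ProjDimLE1 Z) :
    ClosedUnderExt (genBy z) := by
  classical
  intro Y U hU hQ
  obtain ⟨J, W, hW, r, hr⟩ := hU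
  obtain ⟨I, Zm, hZm, q, hq⟩ := hQ
  let r' : (DirectSum J fun j => ↥(W j)) →ₗ[Λ] ↥U := r
  have hr' : Function.Surjective r' := hr
  let q' : (DirectSum I fun i => ↥(Zm i)) →ₗ[Λ] (↥Y ⧸ U) := q
  have hq' : Function.Surjective q' := hq
  have key := fun i : I => keyLemma (k := k) hext U W hW r' hr' (hZm i) (hfl _ (hZm i))
    (hpd _ (hZm i)) (q'.comp (DirectSum.lof Λ I (fun i => ↥(Zm i)) i))
  choose X hXadd α β hβ hcomm using key
  choose nn NN hNN pp hpp using fun i => addCl_surj (hXadd i)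
  let ι : Type v := (Σ i : I, Fin (nn i)) ⊕ J
  let N' : ι → ModuleCat.{v} Λ := Sum.elim (fun s => NN s.1 s.2) W
  have hN' : ∀ c : ι, N' c ∈ z := by rintro (⟨i, t⟩ | j); exacts [hNN i t, hW j]
  let g : ∀ c : ι, ↥(N' c) →ₗ[Λ] ↥Y := fun c =>
    match c with
    | Sum.inl s => (α s.1).comp ((pp s.1).comp (LinearMap.single Λ (fun t => ↥(NN s.1 t)) s.2))
    | Sum.inr j => U.subtype.comp (r'.comp (DirectSum.lof Λ J (fun j => ↥(W j)) j))
  let f : (DirectSum ι fun c => ↥(N' c)) →ₗ[Λ] ↥Y := DirectSum.toModule Λ ι ↥Y g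
  have hfof : ∀ (c : ι) (v : ↥(N' c)), f (DirectSum.of (fun c => ↥(N' c)) c v) = g c v := by
    intro c v
    have h := DirectSum.toModule_lof (ι := ι) (M := fun c => ↥(N' c)) (N := ↥Y) (φ := g) Λ c v
    rw [DirectSum.lof_eq_of] at h
    exact h
  have hUrange : ∀ xw : DirectSum J fun j => ↥(W j), (r' xw : ↥Y) ∈ LinearMap.range f := by
    intro xw
    induction xw using DirectSum.induction_on with
    | zero =>
        rw [map_zero, Submodule.coe_zero]
        exact zero_mem _
    | of j v =>
        refine ⟨DirectSum.of (fun c => ↥(N' c)) (Sum.inr j) v, ?_⟩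
        refine (hfof (Sum.inr j) v).trans ?_
        show U.subtype (r' (DirectSum.lof Λ J (fun j => ↥(W j)) j v)) = _
        rw [DirectSum.lof_eq_of]
        rfl
    | add a b ha hb =>
        rw [map_add, Submodule.coe_add]
        exact add_mem ha hb
  have hQrange : ∀ w : DirectSum I fun i => ↥(Zm i),
      ∃ y : ↥Y, y ∈ LinearMap.range f ∧ U.mkQ y = q' w := by
    intro w
    induction w using DirectSum.induction_on with
    | zero => exact ⟨0, zero_mem _, by rw [map_zero, map_zero]⟩
    | of i v =>
        obtain ⟨x', hx'⟩ := hβ i v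
        obtain ⟨cc, hcc⟩ := hpp i x'
        refine ⟨α i x', ?_, ?_⟩
        · refine ⟨∑ t, DirectSum.of (fun c => ↥(N' c)) (Sum.inl ⟨i, t⟩) (cc t), ?_⟩
          rw [map_sum]
          have h1 : ∀ t, f (DirectSum.of (fun c => ↥(N' c)) (Sum.inl ⟨i, t⟩) (cc t))
              = α i (pp i (LinearMap.single Λ (fun t => ↥(NN i t)) t (cc t))) :=
            fun t => hfof _ _
          simp only [h1]
          rw [← map_sum, ← map_sum]
          have h2 : (∑ t, LinearMap.single Λ (fun t => ↥(NN i t)) t (cc t)) = cc :=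
            Finset.univ_sum_single cc
          rw [h2, hcc]
        · have h3 := LinearMap.congr_fun (hcomm i) x'
          rw [LinearMap.comp_apply, LinearMap.comp_apply] at h3
          rw [h3, LinearMap.comp_apply, hx', DirectSum.lof_eq_of]
    | add a b ha hb =>
        obtain ⟨ya, hya, hqa⟩ := ha
        obtain ⟨yb, hyb, hqb⟩ := hb
        exact ⟨ya + yb, add_mem hya hyb, by rw [map_add, map_add, hqa, hqb]⟩
  refine ⟨ι, N', hN', f, ?_⟩
  intro y
  obtain ⟨w, hw⟩ := hq' (U.mkQ y)
  obtain ⟨y', hy', hqy'⟩ := hQrange w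
  have hyU : y - y' ∈ U := by
    have h0 : U.mkQ (y - y') = 0 := by rw [map_sub, hqy', hw, sub_self]
    rw [Submodule.mkQ_apply, Submodule.Quotient.mk_eq_zero] at h0
    exact h0
  obtain ⟨xw, hxw⟩ := hr' ⟨y - y', hyU⟩
  have h2 : (y - y') ∈ LinearMap.range f := by
    have h3 := hUrange xw
    rw [hxw] at h3
    exact h3
  obtain ⟨a, ha⟩ := hy'
  obtain ⟨b, hb⟩ := h2
  refine ⟨a + b, ?_⟩
  rw [map_add, ha, hb]
  abel
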